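/- Two Witt-algebra modules Ω(λ, a) and Ω(λ', a') are isomorphic if and only if λ = λ' and a = a'. -/

import Mathlib

open Polynomial

/-- The action of the Witt basis element `L_α` on `Ω(λ, a) = ℂ[t]`:
`L_α · f(t) = λ^α (t - αa) f(t - α)`. -/
noncomputable def wittL (lam a : ℂ) (α : ℤ) (f : Polynomial ℂ) : Polynomial ℂ :=
  lam ^ α • ((X - C ((α : ℂ) * a)) * f.comp (X - C (α : ℂ)))

/-- `Ω(λ, a) ≅ Ω(λ', a')` as Witt-algebra modules iff `λ = λ'` and `a = a'`. -/
theorem Omega_iso_iff (lam a lam' a' : ℂ) (hlam : lam ≠ 0) (hlam' : lam' ≠ 0) :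
    (∃ φ : Polynomial ℂ ≃ₗ[ℂ] Polynomial ℂ,
        ∀ (α : ℤ) (f : Polynomial ℂ), φ (wittL lam a α f) = wittL lam' a' α (φ f)) ↔
      (lam = lam' ∧ a = a') := by
  constructor
  · rintro ⟨φ, hφ⟩
    -- φ commutes with multiplication by X
    have h0 : ∀ f : Polynomial ℂ, φ (X * f) = X * φ f := by
      intro f
      have := hφ 0 f
      simpa [wittL] using this
    have hX : ∀ n : ℕ, φ (X ^ n) = X ^ n * φ 1 := by
      intro n
      induction n with
      | zero => simp
      | succ k ih => rw [pow_succ', h0, ih, ← mul_assoc, ← pow_succ']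
    have hmul : ∀ f : Polynomial ℂ, φ f = f * φ 1 := by
      intro f
      induction f using Polynomial.induction_on' with
      | add p q hp hq => rw [map_add, hp, hq, add_mul]
      | monomial n c =>
        rw [← smul_X_eq_monomial, map_smul, hX, smul_mul_assoc]
    -- φ 1 is a unit, hence a nonzero constant
    obtain ⟨f, hf⟩ := φ.surjective 1
    have hu : IsUnit (φ 1) := IsUnit.of_mul_eq_one f (by rw [mul_comm, ← hmul f, hf])
    obtain ⟨c, hcu, hcg⟩ := Polynomial.isUnit_iff.mp hu
    have hc : c ≠ 0 := hcu.ne_zero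
    have key := hφ 1 1
    rw [hmul (wittL lam a 1 1), ← hcg] at key
    simp only [wittL, Int.cast_one, one_mul, Polynomial.one_comp, mul_one, zpow_one,
      Polynomial.C_comp] at key
    have h1 := congrArg (fun p => Polynomial.coeff p 1) key
    have h2 := congrArg (fun p => Polynomial.coeff p 0) key
    simp only [coeff_smul, sub_mul, coeff_sub, smul_eq_mul, coeff_C_mul, coeff_X_one,
      coeff_X_zero, coeff_C, mul_comm, coeff_mul_C] at h1 h2
    norm_num at h1 h2
    have hll : lam = lam' := by
      have h3 : lam * c = lam' * c := by linear_combination h1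
      exact mul_right_cancel₀ hc h3
    refine ⟨hll, ?_⟩
    rw [hll] at h2
    have h3 : c * (lam' * a) = c * (lam' * a') := by linear_combination h2
    exact mul_left_cancel₀ hlam' (mul_left_cancel₀ hc h3)
  · rintro ⟨rfl, rfl⟩
    exact ⟨LinearEquiv.refl ℂ _, fun α f => rfl⟩
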